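/- Let r ≥ 3 be an integer. Then the sequence of Morse link numbers L_n modulo 3^r is eventually periodic with period dividing 2·3^(r−3): there exists N ≥ 0 such that L_{n + 2·3^(r−3)} ≡ L_n (mod 3^r) for all n ≥ N. -/

import Mathlib

/-- `wcat b n x`: `wcat b 0 x = 1` and
`wcat b (n+1) x = b x * ∑_{i+j=n} wcat b i (x+1) * wcat b j x`.
The weighted Catalan number `C_n^b` is `wcat b n 0`. -/
def wcat (b : ℕ → ℤ) : ℕ → ℕ → ℤ
  | 0, _ => 1
  | n + 1, x => b x * ∑ i ∈ (Finset.range (n + 1)).attach,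
      wcat b i.1 (x + 1) * wcat b (n - i.1) x
termination_by n _ => n
decreasing_by
  · exact Finset.mem_range.mp i.2
  · exact Nat.lt_succ_of_le (Nat.sub_le n i.1)

/-- `morseLink n` is the number `L_n` of combinatorial types of Morse links of
order `n`: the weighted Catalan number for the weight `b(x) = (2x+1)²`. -/
def morseLink (n : ℕ) : ℤ := wcat (fun x => (2 * (x : ℤ) + 1) ^ 2) n 0

lemma wcat_zero (b : ℕ → ℤ) (x : ℕ) : wcat b 0 x = 1 := by rw [wcat]

lemma wcat_succ (b : ℕ → ℤ) (n x : ℕ) :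
    wcat b (n+1) x = b x * ∑ i ∈ Finset.range (n + 1), wcat b i (x + 1) * wcat b (n - i) x := by
  rw [wcat]
  congr 1
  exact Finset.sum_attach (Finset.range (n+1)) (fun i => wcat b i (x + 1) * wcat b (n - i) x)

/-- truncation lemma -/
lemma wcat_trunc (b bh : ℕ → ℤ) (X : ℕ) (W : ℕ → ℕ)
    (hbh : ∀ x < X, bh x = b x) (hWX : W X = 0)
    (hW : ∀ x < X, (3:ℤ)^(W x) ∣ b x * 3^(W (x+1))) :
    ∀ n, ∀ x ≤ X, (3:ℤ)^(W x) ∣ wcat b n x - wcat bh n x := by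
  intro n
  induction n using Nat.strong_induction_on with
  | _ n IH =>
    intro x hx
    match n with
    | 0 => simp [wcat_zero]
    | Nat.succ n =>
      rcases eq_or_lt_of_le hx with rfl | hlt
      · rw [hWX]
        simp
      · rw [wcat_succ, wcat_succ, hbh x hlt, ← mul_sub, ← Finset.sum_sub_distrib]
        have key : ∀ i ∈ Finset.range (n+1),
            wcat b i (x+1) * wcat b (n-i) x - wcat bh i (x+1) * wcat bh (n-i) x
            = (wcat b i (x+1) - wcat bh i (x+1)) * wcat b (n-i) x
              + wcat bh i (x+1) * (wcat b (n-i) x - wcat bh (n-i) x) := by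
          intro i _; ring
        rw [Finset.sum_congr rfl key, Finset.sum_add_distrib, mul_add]
        apply dvd_add
        · -- b x * Σ (Δ_{x+1} * w)
          have h1 : (3:ℤ)^(W (x+1)) ∣ ∑ i ∈ Finset.range (n+1),
              (wcat b i (x+1) - wcat bh i (x+1)) * wcat b (n-i) x := by
            apply Finset.dvd_sum
            intro i hi
            exact Dvd.dvd.mul_right
              (IH i (Nat.lt_succ_of_le (Finset.mem_range_succ_iff.mp hi)) (x+1) hlt) _
          obtain ⟨t, ht⟩ := h1
          rw [ht, ← mul_assoc]
          exact Dvd.dvd.mul_right (hW x hlt) t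
        · -- b x * Σ (ŵ * Δ_x)
          apply Dvd.dvd.mul_left
          apply Finset.dvd_sum
          intro i _
          exact Dvd.dvd.mul_left (IH (n-i) (Nat.lt_succ_of_le (Nat.sub_le n i)) x hx) _

def bw : ℕ → ℤ := fun x => (2 * (x:ℤ) + 1)^2
def bt (X : ℕ) : ℕ → ℤ := fun x => if x < X then bw x else 0
def Wf (m : ℕ) : ℕ → ℕ := fun x => 2 * ((3*m + 2 - x + 2) / 3)

lemma Wf_X (m : ℕ) : Wf m (3*m+2) = 0 := by unfold Wf; omega

lemma Wf_zero (m : ℕ) : Wf m 0 = 2*(m+1) := by unfold Wf; omega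

lemma bt_lt (X x : ℕ) (h : x < X) : bt X x = bw x := by simp [bt, h]

lemma bt_X (X : ℕ) : bt X X = 0 := by simp [bt]

lemma Wf_dvd (m : ℕ) : ∀ x < 3*m+2, (3:ℤ)^(Wf m x) ∣ bw x * 3^(Wf m (x+1)) := by
  intro x hx
  by_cases h : x % 3 = 1
  · have hW : Wf m x = Wf m (x+1) + 2 := by unfold Wf; omega
    obtain ⟨k, hk⟩ : ∃ k, x = 3*k+1 := ⟨x/3, by omega⟩
    have hb : bw x = 9 * (2*(k:ℤ)+1)^2 := by
      subst hk; unfold bw; push_cast; ring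
    rw [hW, hb]
    exact ⟨(2*(k:ℤ)+1)^2, by rw [pow_add]; ring⟩
  · have hW : Wf m x = Wf m (x+1) := by unfold Wf; omega
    rw [hW]
    exact dvd_mul_left _ _

open PowerSeries

noncomputable def Fs (b : ℕ → ℤ) (x : ℕ) : PowerSeries ℤ := PowerSeries.mk fun n => wcat b n x

lemma Fs_eq (b : ℕ → ℤ) (x : ℕ) :
    Fs b x = 1 + PowerSeries.X * (C (b x) * Fs b (x+1) * Fs b x) := by
  ext n
  cases n with
  | zero => simp [Fs, wcat_zero]
  | succ n =>
    rw [map_add, PowerSeries.coeff_succ_X_mul]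
    simp only [Fs, coeff_mk, wcat_succ, PowerSeries.coeff_one]
    rw [mul_assoc, PowerSeries.coeff_C_mul, PowerSeries.coeff_mul]
    rw [Finset.Nat.sum_antidiagonal_eq_sum_range_succ_mk]
    simp [coeff_mk]

lemma Fs_top (b : ℕ → ℤ) (X : ℕ) (h : b X = 0) : Fs b X = 1 := by
  ext n
  cases n with
  | zero => simp [Fs, wcat_zero]
  | succ n => simp [Fs, coeff_mk, wcat_succ, h, PowerSeries.coeff_one]

/-- continuants, indexed from the top: DD b X k "=" B_{X+1-k} -/
noncomputable def DD (b : ℕ → ℤ) (X : ℕ) : ℕ → PowerSeries ℤ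
  | 0 => 1
  | 1 => 1
  | (k+2) => DD b X (k+1) - C (b (X - 1 - k)) * PowerSeries.X * DD b X k

lemma DD_cc (b : ℕ → ℤ) (X : ℕ) : ∀ k, constantCoeff (DD b X k) = 1 ∧ constantCoeff (DD b X (k+1)) = 1 := by
  intro k
  induction k with
  | zero => constructor <;> simp [DD]
  | succ k ih =>
    refine ⟨ih.2, ?_⟩
    rw [DD]
    simp [ih.2, mul_assoc]

lemma DD_Fs (b : ℕ → ℤ) (X : ℕ) (hb : b X = 0) :
    ∀ k ≤ X, DD b X (k+1) * Fs b (X - k) = DD b X k := by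
  intro k
  induction k with
  | zero =>
    intro _
    simp only [Nat.sub_zero, DD, one_mul]
    exact Fs_top b X hb
  | succ k ih =>
    intro hk
    have hk' : k ≤ X := Nat.le_of_succ_le hk
    have hidx : X - 1 - k = X - (k+1) := by omega
    have hidx2 : (X - (k+1)) + 1 = X - k := by omega
    rw [DD, hidx, sub_mul]
    have hF := Fs_eq b (X - (k+1))
    have ihk := ih hk'
    rw [← hidx2] at ihk
    -- DD(k+1) * F_{x} - C b x * X * DD k * F_x = DD (k+1)
    -- using DD k = DD (k+1) * F_{x+1}
    rw [← ihk]
    have : Fs b (X - (k+1)) - C (b (X - (k+1))) * PowerSeries.X * (Fs b (X - (k+1) + 1) * Fs b (X - (k+1))) = 1 := by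
      nth_rewrite 1 [hF]
      ring
    calc DD b X (k+1) * Fs b (X-(k+1)) - C (b (X-(k+1))) * PowerSeries.X * (DD b X (k+1) * Fs b (X-(k+1)+1)) * Fs b (X-(k+1))
        = DD b X (k+1) * (Fs b (X-(k+1)) - C (b (X-(k+1))) * PowerSeries.X * (Fs b (X-(k+1)+1) * Fs b (X-(k+1)))) := by ring
      _ = DD b X (k+1) := by rw [this, mul_one]

/-- eventually-zero coefficients -/
def EvZ (s : PowerSeries ℤ) : Prop := ∃ D, ∀ n, D ≤ n → coeff n s = 0

lemma EvZ.add {s t : PowerSeries ℤ} (hs : EvZ s) (ht : EvZ t) : EvZ (s + t) := by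
  obtain ⟨D1, h1⟩ := hs; obtain ⟨D2, h2⟩ := ht
  exact ⟨max D1 D2, fun n hn => by
    rw [map_add, h1 n (le_trans (le_max_left _ _) hn), h2 n (le_trans (le_max_right _ _) hn), add_zero]⟩

lemma EvZ.neg {s : PowerSeries ℤ} (hs : EvZ s) : EvZ (-s) := by
  obtain ⟨D, h⟩ := hs
  exact ⟨D, fun n hn => by rw [map_neg, h n hn, neg_zero]⟩

lemma EvZ.sub {s t : PowerSeries ℤ} (hs : EvZ s) (ht : EvZ t) : EvZ (s - t) := by
  rw [sub_eq_add_neg]; exact hs.add ht.neg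

lemma EvZ.mul {s t : PowerSeries ℤ} (hs : EvZ s) (ht : EvZ t) : EvZ (s * t) := by
  obtain ⟨D1, h1⟩ := hs; obtain ⟨D2, h2⟩ := ht
  refine ⟨D1 + D2, fun n hn => ?_⟩
  rw [PowerSeries.coeff_mul]
  apply Finset.sum_eq_zero
  intro p hp
  rw [Finset.HasAntidiagonal.mem_antidiagonal] at hp
  rcases le_or_gt D1 p.1 with h | h
  · rw [h1 p.1 h, zero_mul]
  · rw [h2 p.2 (by omega), mul_zero]

lemma EvZ.one : EvZ (1 : PowerSeries ℤ) :=
  ⟨1, fun n hn => by rw [PowerSeries.coeff_one, if_neg (by omega)]⟩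

lemma EvZ_C (a : ℤ) : EvZ (C a) :=
  ⟨1, fun n hn => by rw [PowerSeries.coeff_C, if_neg (by omega)]⟩

lemma EvZ_X : EvZ (PowerSeries.X : PowerSeries ℤ) :=
  ⟨2, fun n hn => by rw [PowerSeries.coeff_X, if_neg (by omega)]⟩

lemma EvZ.pow {s : PowerSeries ℤ} (hs : EvZ s) (k : ℕ) : EvZ (s ^ k) := by
  induction k with
  | zero => rw [pow_zero]; exact EvZ.one
  | succ k ih => rw [pow_succ]; exact ih.mul hs

lemma EvZ_natnum (a : ℕ) [a.AtLeastTwo] : EvZ (OfNat.ofNat a : PowerSeries ℤ) := by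
  rw [← map_ofNat (C (R := ℤ)) a]; exact EvZ_C _

lemma DD_EvZ (b : ℕ → ℤ) (X : ℕ) : ∀ k, EvZ (DD b X k) ∧ EvZ (DD b X (k+1)) := by
  intro k
  induction k with
  | zero => constructor <;> (rw [DD]; exact EvZ.one)
  | succ k ih =>
    refine ⟨ih.2, ?_⟩
    rw [DD]
    exact ih.2.sub (((EvZ_C _).mul EvZ_X).mul ih.1)

/-- freshman's dream iterated -/
lemma freshman : ∀ j : ℕ, ∃ w : PowerSeries ℤ,
    (1 - PowerSeries.X^2)^(3^j) = 1 - PowerSeries.X^(2*3^j) + 3*w := by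
  intro j
  induction j with
  | zero => exact ⟨0, by norm_num⟩
  | succ j ih =>
    obtain ⟨w, hw⟩ := ih
    refine ⟨(PowerSeries.X^(2*3^j))^2 - PowerSeries.X^(2*3^j)
      + 3*(1-PowerSeries.X^(2*3^j))^2*w + 9*(1-PowerSeries.X^(2*3^j))*w^2 + 9*w^3, ?_⟩
    have h1 : (1 - PowerSeries.X^2 : PowerSeries ℤ)^(3^(j+1)) = ((1 - PowerSeries.X^2)^(3^j))^3 := by
      rw [← pow_mul, pow_succ]
      ring_nf
    have h2 : (PowerSeries.X : PowerSeries ℤ)^(2*3^(j+1)) = (PowerSeries.X^(2*3^j))^3 := by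
      rw [← pow_mul]
      congr 1
      ring
    rw [h1, hw, h2]
    ring

lemma C31 (s : ℤ) : C (3*s+1) = 3*C s+1 := by
  rw [map_add, map_mul, map_one, map_ofNat]

lemma C9 (s : ℤ) : C (9*s) = 3*(3*C s) := by
  rw [map_mul, map_ofNat]
  ring

lemma bw_mod3_0 (j : ℕ) : bw (3*j) = 3*(12*(j:ℤ)^2+4*j) + 1 := by
  unfold bw; push_cast; ring

lemma bw_mod3_1 (j : ℕ) : bw (3*j+1) = 9*((2*(j:ℤ)+1)^2) := by
  unfold bw; push_cast; ring

lemma bw_mod3_2 (j : ℕ) : bw (3*j+2) = 3*(12*(j:ℤ)^2+20*j+8) + 1 := by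
  unfold bw; push_cast; ring

lemma DD_mod3 (m : ℕ) : ∀ i, i ≤ m →
    (∃ E, DD (bt (3*m+2)) (3*m+2) (3*i+1) = (1+PowerSeries.X)^i + 3*E) ∧
    (∃ E, DD (bt (3*m+2)) (3*m+2) (3*i+2) = (1+PowerSeries.X)^i + 3*E) ∧
    (∃ E, DD (bt (3*m+2)) (3*m+2) (3*i+3) = (1-PowerSeries.X)*(1+PowerSeries.X)^i + 3*E) := by
  have hDD2 : ∀ k, DD (bt (3*m+2)) (3*m+2) (k+2)
      = DD (bt (3*m+2)) (3*m+2) (k+1) - C (bt (3*m+2) (3*m+2-1-k)) * PowerSeries.X * DD (bt (3*m+2)) (3*m+2) k := by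
    intro k; rw [DD]
  intro i
  induction i with
  | zero =>
    intro _
    refine ⟨⟨0, by simp [DD]⟩, ?_, ?_⟩
    · -- DD 2 = 1 - C (bw (3m+1)) X
      refine ⟨-((3*C ((2*(m:ℤ)+1)^2))*PowerSeries.X), ?_⟩
      have h1 : 3*m+2-1-0 = 3*m+1 := by omega
      have h2 : bt (3*m+2) (3*m+1) = bw (3*m+1) := bt_lt _ _ (by omega)
      rw [show (3*0+2) = 0+2 from rfl, hDD2 0, h1, h2, bw_mod3_1, C9]
      simp only [DD]
      ring
    · refine ⟨-((3*C ((2*(m:ℤ)+1)^2))*PowerSeries.X) - C (12*(m:ℤ)^2+4*m)*PowerSeries.X, ?_⟩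
      have h1 : 3*m+2-1-1 = 3*m := by omega
      have h2 : bt (3*m+2) (3*m) = bw (3*m) := bt_lt _ _ (by omega)
      rw [show (3*0+3) = 1+2 from rfl, hDD2 1, h1, h2, bw_mod3_0, C31]
      have h3 : 3*m+2-1-0 = 3*m+1 := by omega
      rw [show (1+1) = 0+2 from rfl, hDD2 0, h3, bt_lt _ _ (by omega), bw_mod3_1, C9]
      simp only [DD]
      ring
  | succ i ih =>
    intro hi
    obtain ⟨⟨E1, hE1⟩, ⟨E2, hE2⟩, ⟨E3, hE3⟩⟩ := ih (by omega)
    set j : ℕ := m - i - 1 with hj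
    have c2 : bt (3*m+2) (3*m+2-1-(3*i+2)) = 3*(12*(j:ℤ)^2+20*j+8) + 1 := by
      rw [show 3*m+2-1-(3*i+2) = 3*j+2 by omega, bt_lt _ _ (by omega), bw_mod3_2]
    have c1 : bt (3*m+2) (3*m+2-1-(3*i+3)) = 9*((2*(j:ℤ)+1)^2) := by
      rw [show 3*m+2-1-(3*i+3) = 3*j+1 by omega, bt_lt _ _ (by omega), bw_mod3_1]
    have c0 : bt (3*m+2) (3*m+2-1-(3*i+4)) = 3*(12*(j:ℤ)^2+4*j) + 1 := by
      rw [show 3*m+2-1-(3*i+4) = 3*j by omega, bt_lt _ _ (by omega), bw_mod3_0]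
    set s2 : ℤ := 12*(j:ℤ)^2+20*j+8
    set s0 : ℤ := 12*(j:ℤ)^2+4*j
    set u : PowerSeries ℤ := PowerSeries.X
    -- DD(3i+4)
    have h4 : ∃ E, DD (bt (3*m+2)) (3*m+2) (3*(i+1)+1) = (1+u)^(i+1) + 3*E := by
      refine ⟨E3 - u*(1+u)^i - C s2*u*(1+u)^i - 3*C s2*u*E2 - u*E2, ?_⟩
      rw [show 3*(i+1)+1 = (3*i+2)+2 by ring, hDD2 (3*i+2), c2, C31,
        show 3*i+2+1 = 3*i+3 by ring, hE3, hE2]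
      ring
    obtain ⟨E4, hE4⟩ := h4
    have h5 : ∃ E, DD (bt (3*m+2)) (3*m+2) (3*(i+1)+2) = (1+u)^(i+1) + 3*E := by
      refine ⟨E4 - (3*C ((2*(j:ℤ)+1)^2))*u*((1-u)*(1+u)^i+3*E3), ?_⟩
      rw [show 3*(i+1)+2 = (3*i+3)+2 by ring, hDD2 (3*i+3), c1, C9,
        show 3*i+3+1 = 3*(i+1)+1 by ring, hE4, hE3]
      ring
    obtain ⟨E5, hE5⟩ := h5
    refine ⟨⟨E4, hE4⟩, ⟨E5, hE5⟩, ?_⟩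
    refine ⟨E5 - C s0*u*(1+u)^(i+1) - 3*C s0*u*E4 - u*E4, ?_⟩
    rw [show 3*(i+1)+3 = (3*i+4)+2 by ring, hDD2 (3*i+4), c0, C31,
      show 3*i+4+1 = 3*(i+1)+2 by ring, show 3*i+4 = 3*(i+1)+1 by ring, hE5, hE4]
    ring

lemma three_pow_coeff (k : ℕ) (Y : PowerSeries ℤ) (n : ℕ) :
    coeff n ((3:PowerSeries ℤ)^k * Y) = 3^k * coeff n Y := by
  have : ((3:PowerSeries ℤ))^k = C (3^k) := by
    rw [map_pow, map_ofNat]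
  rw [this, PowerSeries.coeff_C_mul]

/-- certificate implies eventual divisibility of coefficients -/
lemma recover (F q p g h u : PowerSeries ℤ) (k : ℕ)
    (hq : IsUnit q) (hqF : q * F = p)
    (hid : u * p = q * g + (3:PowerSeries ℤ)^k * h) (hg : EvZ g) :
    ∃ D, ∀ n, D ≤ n → (3:ℤ)^k ∣ coeff n (u * F) := by
  obtain ⟨v, hv⟩ := hq
  obtain ⟨Dg, hDg⟩ := hg
  refine ⟨Dg, fun n hn => ?_⟩
  have key : u * F - g = (3:PowerSeries ℤ)^k * ((v⁻¹ : Units _) * h) := by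
    have h1 : (v⁻¹ : Units _) * (q * (u * F - g)) = (v⁻¹ : Units _) * ((3:PowerSeries ℤ)^k * h) := by
      congr 1
      rw [mul_sub, show q * (u*F) = u * (q*F) by ring, hqF, hid]
      ring
    calc u * F - g = ((v⁻¹ : Units _) * q) * (u * F - g) := by
          rw [← hv, Units.inv_mul, one_mul]
      _ = (3:PowerSeries ℤ)^k * ((v⁻¹ : Units _) * h) := by rw [mul_assoc, h1]; ring
  have : coeff n (u * F) - coeff n g = 3^k * coeff (R := ℤ) n ((v⁻¹ : Units _) * h) := by
    rw [← map_sub, key, three_pow_coeff]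
  rw [hDg n hn, sub_zero] at this
  exact ⟨_, this⟩

/-- eventual divisibility implies certificate -/
lemma decompose (F q p u : PowerSeries ℤ) (k : ℕ)
    (hqF : q * F = p) (hu : EvZ u) (hp : EvZ p) (hq : EvZ q) (D : ℕ)
    (hED : ∀ n, D ≤ n → (3:ℤ)^k ∣ coeff n (u * F)) :
    ∃ g h, EvZ g ∧ EvZ h ∧ u * p = q * g + (3:PowerSeries ℤ)^k * h := by
  set g : PowerSeries ℤ := PowerSeries.mk (fun n => if n < D then coeff n (u*F) else 0) with hgdef
  set H : PowerSeries ℤ := PowerSeries.mk (fun n => coeff n (u*F - g) / 3^k) with hHdef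
  have hgEv : EvZ g := ⟨D, fun n hn => by simp [hgdef, coeff_mk, Nat.not_lt.mpr hn]⟩
  have hsplit : u * F = g + (3:PowerSeries ℤ)^k * H := by
    ext n
    rw [map_add, three_pow_coeff]
    simp only [hHdef, coeff_mk]
    have hcg : coeff n g = if n < D then coeff n (u*F) else 0 := by
      rw [hgdef, coeff_mk]
    by_cases hn : n < D
    · have h0 : coeff n (u*F - g) = 0 := by
        rw [map_sub, hcg, if_pos hn, sub_self]
      rw [h0, hcg, if_pos hn]
      norm_num
    · have hdvd : (3:ℤ)^k ∣ coeff n (u*F - g) := by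
        rw [map_sub, hcg, if_neg hn, sub_zero]
        exact hED n (Nat.not_lt.mp hn)
      rw [Int.mul_ediv_cancel' hdvd, map_sub, hcg, if_neg hn]
      ring
  refine ⟨g, q * H, hgEv, ?_, ?_⟩
  · -- EvZ (q*H)
    have hqH : (3:PowerSeries ℤ)^k * (q * H) = u * p - q * g := by
      rw [← hqF, show u * (q*F) = q * (u*F) by ring, hsplit]
      ring
    obtain ⟨D2, hD2⟩ := (hu.mul hp).sub (hq.mul hgEv)
    refine ⟨D2, fun n hn => ?_⟩
    have := congrArg (coeff n) hqH
    rw [three_pow_coeff, hD2 n hn] at this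
    exact (mul_eq_zero.mp this).resolve_left (by positivity)
  · rw [← hqF, show u * (q*F) = q * (u*F) by ring, hsplit]
    ring

lemma morseLink_eq (n : ℕ) : morseLink n = wcat bw n 0 := rfl

lemma coeff_oneSub (P : ℕ) (f : ℕ → ℤ) (n : ℕ) (hn : P ≤ n) :
    coeff n ((1 - PowerSeries.X^P) * PowerSeries.mk f) = f n - f (n - P) := by
  rw [sub_mul, one_mul, map_sub, coeff_mk]
  congr 1
  have h : n = (n - P) + P := by omega
  rw [h, PowerSeries.coeff_X_pow_mul, coeff_mk]
  congr 1
  omega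

lemma hat_close (m k : ℕ) (hk : k ≤ 2*(m+1)) (n : ℕ) :
    (3:ℤ)^k ∣ wcat bw n 0 - wcat (bt (3*m+2)) n 0 := by
  have h := wcat_trunc bw (bt (3*m+2)) (3*m+2) (Wf m)
    (fun x hx => bt_lt _ _ hx) (Wf_X m) (Wf_dvd m) n 0 (Nat.zero_le _)
  rw [Wf_zero] at h
  exact dvd_trans (pow_dvd_pow 3 hk) h

lemma DD_unit (b : ℕ → ℤ) (X k : ℕ) : IsUnit (DD b X k) := by
  rw [PowerSeries.isUnit_iff_constantCoeff, (DD_cc b X k).1]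
  exact isUnit_one

def Per (r P : ℕ) : Prop := ∃ D, ∀ n, D ≤ n → (3:ℤ)^r ∣ morseLink (n+P) - morseLink n

/-- translate Per into coefficient statement for the truncated series and back -/
lemma Per_to_coeff (r P m : ℕ) (hP : 0 < P) (hr : r ≤ 2*(m+1)) (h : Per r P) :
    ∃ D, ∀ n, D ≤ n → (3:ℤ)^r ∣ coeff n ((1 - PowerSeries.X^P) * Fs (bt (3*m+2)) 0) := by
  obtain ⟨D, hD⟩ := h
  refine ⟨D + P, fun n hn => ?_⟩
  have hPn : P ≤ n := le_trans (Nat.le_add_left P D) hn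
  rw [show Fs (bt (3*m+2)) 0 = PowerSeries.mk (fun n => wcat (bt (3*m+2)) n 0) from rfl,
    coeff_oneSub P _ n hPn]
  have e1 := hat_close m r hr n
  have e2 := hat_close m r hr (n - P)
  have e3 := hD (n - P) (by omega)
  rw [morseLink_eq, morseLink_eq, show n - P + P = n by omega] at e3
  have : wcat (bt (3*m+2)) n 0 - wcat (bt (3*m+2)) (n-P) 0
      = (wcat bw n 0 - wcat bw (n-P) 0) - (wcat bw n 0 - wcat (bt (3*m+2)) n 0)
        + (wcat bw (n-P) 0 - wcat (bt (3*m+2)) (n-P) 0) := by ring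
  rw [this]
  exact dvd_add (dvd_sub e3 e1) e2

lemma coeff_to_Per (r P m : ℕ) (hP : 0 < P) (hr : r ≤ 2*(m+1)) (D : ℕ)
    (h : ∀ n, D ≤ n → (3:ℤ)^r ∣ coeff n ((1 - PowerSeries.X^P) * Fs (bt (3*m+2)) 0)) :
    Per r P := by
  refine ⟨D, fun n hn => ?_⟩
  have hh := h (n + P) (by omega)
  rw [show Fs (bt (3*m+2)) 0 = PowerSeries.mk (fun n => wcat (bt (3*m+2)) n 0) from rfl,
    coeff_oneSub P _ (n+P) (by omega), show n + P - P = n by omega] at hh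
  have e1 := hat_close m r hr n
  have e2 := hat_close m r hr (n + P)
  rw [morseLink_eq, morseLink_eq]
  have : wcat bw (n+P) 0 - wcat bw n 0
      = (wcat (bt (3*m+2)) (n+P) 0 - wcat (bt (3*m+2)) n 0)
        + (wcat bw (n+P) 0 - wcat (bt (3*m+2)) (n+P) 0)
        - (wcat bw n 0 - wcat (bt (3*m+2)) n 0) := by ring
  rw [this]
  exact dvd_sub (dvd_add hh e2) e1

lemma aux_le (r : ℕ) (hr : 3 ≤ r) : r/2 ≤ 2*3^(r-3) := by
  have h : ∀ s : ℕ, s + 3 ≤ 4*3^s := by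
    intro s
    induction s with
    | zero => norm_num
    | succ s ih =>
      have h1 : 1 ≤ 3^s := Nat.one_le_pow _ _ (by norm_num)
      calc s + 1 + 3 ≤ 4*3^s + 1 := by omega
        _ ≤ 4*3^(s+1) := by rw [pow_succ]; nlinarith
  have h2 := h (r - 3)
  omega
  
lemma step (r : ℕ) (hr : 3 ≤ r) (hPer : Per r (2*3^(r-3))) : Per (r+1) (2*3^(r-2)) := by
  set m : ℕ := r/2 with hm
  set K : ℕ := 3^(r-3) with hK
  set P : ℕ := 2*3^(r-3) with hP
  have hPK : P = 2*K := rfl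
  have hmK : m ≤ 2*K := aux_le r hr
  have hK1 : 1 ≤ K := Nat.one_le_iff_ne_zero.mpr (pow_ne_zero _ (by norm_num))
  have hrm : r + 1 ≤ 2*(m+1) := by omega
  set Xn : ℕ := 3*m+2 with hXn
  set b : ℕ → ℤ := bt Xn with hb
  set q : PowerSeries ℤ := DD b Xn (Xn+1) with hq
  set p : PowerSeries ℤ := DD b Xn Xn with hpd
  set u : PowerSeries ℤ := 1 - PowerSeries.X^P with hu
  have hqF : q * Fs b 0 = p := by
    have h := DD_Fs b Xn (by rw [hb]; exact bt_X Xn) Xn le_rfl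
    rwa [Nat.sub_self] at h
  -- old-period eventual divisibility
  have hP0 : 0 < P := by rw [hP]; positivity
  obtain ⟨D0, hD0⟩ := Per_to_coeff r P m hP0 (by omega) hPer
  -- decompose into certificate
  obtain ⟨g, h, hgEv, hhEv, hcert⟩ := decompose (Fs b 0) q p u r hqF
    (EvZ.one.sub (EvZ_X.pow P)) (DD_EvZ b Xn Xn).1 (DD_EvZ b Xn (Xn+1)).1 D0 hD0
  -- mod 3 structure of q
  obtain ⟨E, hE⟩ := (DD_mod3 m m le_rfl).2.2
  have hqE : q = (1-PowerSeries.X)*(1+PowerSeries.X)^m + 3*E := by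
    rw [hq, hXn, show 3*m+2+1 = 3*m+3 by ring]
    exact hE
  -- freshman
  obtain ⟨w, hw⟩ := freshman (r-3)
  have huw : u = (1-PowerSeries.X^2)^K - 3*w := by
    rw [hu, hPK, hw]; ring
  -- cofactor
  set c : PowerSeries ℤ := (1-PowerSeries.X)^(2*K-1) * (1+PowerSeries.X)^(2*K-m) with hc
  have hqc : ((1-PowerSeries.X)*(1+PowerSeries.X)^m) * c
      = (1-PowerSeries.X^2)^(2*K) := by
    have e1 : ((1-PowerSeries.X)*(1+PowerSeries.X)^m) * c
        = ((1-PowerSeries.X)^(1+(2*K-1)))*((1+PowerSeries.X)^(m+(2*K-m))) := by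
      rw [pow_add, pow_add, pow_one, hc]
      ring
    rw [e1, show 1+(2*K-1) = 2*K by omega, show m+(2*K-m) = 2*K by omega,
      show ((1:PowerSeries ℤ)-PowerSeries.X^2) = (1-PowerSeries.X)*(1+PowerSeries.X) by ring,
      mul_pow]
  set Z : PowerSeries ℤ := -(E*c) - 2*(1-PowerSeries.X^2)^K*w + 3*w^2 with hZ
  have hu2 : u^2 = q*c + 3*Z := by
    rw [hZ]
    have e1 : u^2 = (1-PowerSeries.X^2)^(2*K) - 6*(1-PowerSeries.X^2)^K*w + 9*w^2 := by
      rw [huw, show 2*K = K*2 by ring, pow_mul]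
      ring
    rw [e1, ← hqc, hqE]
    ring
  -- main certificate at level r+1
  set G : PowerSeries ℤ := g*(u^2 + 3*PowerSeries.X^P) + (3:PowerSeries ℤ)^r * (c*h) with hG
  set R : PowerSeries ℤ := h*Z + PowerSeries.X^P*h with hR
  have key : (1 - PowerSeries.X^(3*P) : PowerSeries ℤ) = u*(u^2 + 3*PowerSeries.X^P) := by
    rw [hu, show 3*P = P*3 by ring, pow_mul]
    ring
  have hstep : (3:PowerSeries ℤ)^r*(h*(u^2))
      = (3:PowerSeries ℤ)^r*(h*(q*c)) + (3:PowerSeries ℤ)^(r+1)*(h*Z) := by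
    rw [hu2, pow_succ]
    ring
  have main : (1 - PowerSeries.X^(3*P)) * p = q*G + (3:PowerSeries ℤ)^(r+1)*R := by
    calc (1 - PowerSeries.X^(3*P)) * p = (u*p)*(u^2 + 3*PowerSeries.X^P) := by rw [key]; ring
      _ = (q*g + (3:PowerSeries ℤ)^r*h)*(u^2 + 3*PowerSeries.X^P) := by rw [hcert]
      _ = q*(g*(u^2 + 3*PowerSeries.X^P)) + (3:PowerSeries ℤ)^r*(h*(u^2))
          + (3:PowerSeries ℤ)^(r+1)*(PowerSeries.X^P*h) := by rw [pow_succ]; ring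
      _ = q*(g*(u^2 + 3*PowerSeries.X^P)) + ((3:PowerSeries ℤ)^r*(h*(q*c)) + (3:PowerSeries ℤ)^(r+1)*(h*Z))
          + (3:PowerSeries ℤ)^(r+1)*(PowerSeries.X^P*h) := by rw [hstep]
      _ = q*G + (3:PowerSeries ℤ)^(r+1)*R := by rw [hG, hR]; ring
  have hGEv : EvZ G := by
    refine (hgEv.mul ((((EvZ.one.sub (EvZ_X.pow P)).pow 2)).add ((EvZ_natnum 3).mul (EvZ_X.pow P)))).add
      (((EvZ_natnum 3).pow r).mul (((((EvZ.one.sub EvZ_X).pow _)).mul ((EvZ.one.add EvZ_X).pow _)).mul hhEv))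
  obtain ⟨D1, hD1⟩ := recover (Fs b 0) q p G R (1 - PowerSeries.X^(3*P)) (r+1)
    (DD_unit b Xn (Xn+1)) hqF main hGEv
  have hPer' : Per (r+1) (3*P) := coeff_to_Per (r+1) (3*P) m (by omega) hrm D1 hD1
  have heq : 2*3^(r-2) = 3*P := by
    rw [hP, show r-2 = (r-3)+1 by omega, pow_succ]
    ring
  rwa [heq]

lemma base : Per 3 2 := by
  have hqF : DD (bt 5) 5 6 * Fs (bt 5) 0 = DD (bt 5) 5 5 := by
    have h := DD_Fs (bt 5) 5 (bt_X 5) 5 le_rfl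
    rwa [Nat.sub_self] at h
  have hqval : DD (bt 5) 5 6 = 1 - 165*PowerSeries.X + 3350*PowerSeries.X^2 - 2025*PowerSeries.X^3 := by
    simp only [DD, bt, bw]; norm_num; ring
  have hpval : DD (bt 5) 5 5 = 1 - 164*PowerSeries.X + 3195*PowerSeries.X^2 := by
    simp only [DD, bt, bw]; norm_num; ring
  have main : (1 - PowerSeries.X^2) * DD (bt 5) 5 5
      = DD (bt 5) 5 6 * (1 + PowerSeries.X + 9*PowerSeries.X^2)
        + (3:PowerSeries ℤ)^3*(12*PowerSeries.X^3 - 1160*PowerSeries.X^4 + 675*PowerSeries.X^5) := by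
    rw [hqval, hpval]
    ring
  have hGEv : EvZ (1 + PowerSeries.X + 9*PowerSeries.X^2 : PowerSeries ℤ) :=
    (EvZ.one.add EvZ_X).add ((EvZ_natnum 9).mul (EvZ_X.pow 2))
  obtain ⟨D1, hD1⟩ := recover (Fs (bt 5) 0) (DD (bt 5) 5 6) (DD (bt 5) 5 5)
    (1 + PowerSeries.X + 9*PowerSeries.X^2)
    (12*PowerSeries.X^3 - 1160*PowerSeries.X^4 + 675*PowerSeries.X^5)
    (1 - PowerSeries.X^2) 3 (DD_unit (bt 5) 5 6) hqF main hGEv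
  have h5 : (5:ℕ) = 3*1+2 := by norm_num
  rw [h5] at hD1
  exact coeff_to_Per 3 2 1 (by norm_num) (by norm_num) D1 hD1

theorem morseLink_periodic (r : ℕ) (hr : 3 ≤ r) : Per r (2*3^(r-3)) := by
  induction r, hr using Nat.le_induction with
  | base => exact base
  | succ r hr ih =>
    have := step r hr ih
    rwa [show r+1-3 = r-2 by omega]

/-- For `r ≥ 3`, the sequence `L_n (mod 3^r)` is eventually periodic with period
dividing `2·3^(r−3)`. -/
theorem morseLink_eventually_periodic_mod_three_pow
    (r : ℕ) (hr : 3 ≤ r) :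
    ∃ N : ℕ, ∀ n : ℕ, N ≤ n →
      morseLink (n + 2 * 3 ^ (r - 3)) ≡ morseLink n [ZMOD (3 : ℤ) ^ r] := by
  obtain ⟨D, hD⟩ := morseLink_periodic r hr
  refine ⟨D, fun n hn => ?_⟩
  rw [Int.modEq_iff_dvd]
  exact dvd_sub_comm.mp (hD n hn)
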